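/- Let (M, P) be a τ-rigid pair over a finite-dimensional algebra A (M is τ-rigid, P projective, Hom_A(P, M) = 0). Then for any module N: the maximum of ⟨g_M − g_P, dim N₀⟩ over quotient modules N₀ of N equals dim Hom_A(N, τM) + dim Hom_A(P, N). -/
import Mathlib

open Module Submodule LinearMap

section Aux
variable {k A : Type} [Field k] [Ring A] [Algebra k A]
variable {X Y Z : Type}
  [AddCommGroup X] [Module A X] [Module k X] [IsScalarTower k A X]
  [AddCommGroup Y] [Module A Y] [Module k Y] [IsScalarTower k A Y] [SMulCommClass A k Y]
  [AddCommGroup Z] [Module A Z] [Module k Z] [IsScalarTower k A Z] [SMulCommClass A k Z]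

/-- The Hom space of `A`-linear maps is finite dimensional over `k`. -/
lemma homFD [FiniteDimensional k X] [FiniteDimensional k Y] :
    FiniteDimensional k (X →ₗ[A] Y) :=
  FiniteDimensional.of_injective (LinearMap.restrictScalarsₗ k A X Y k)
    (LinearMap.restrictScalars_injective k)

/-- Precomposition with an `A`-linear map, as a `k`-linear map on Hom spaces. -/
def compQ (e : X →ₗ[A] Y) : (Y →ₗ[A] Z) →ₗ[k] (X →ₗ[A] Z) where
  toFun g := g.comp e
  map_add' g h := LinearMap.add_comp _ _ _
  map_smul' c g := LinearMap.smul_comp _ _ _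

/-- Postcomposition with an `A`-linear map, as a `k`-linear map on Hom spaces. -/
def lcompQ (e : Y →ₗ[A] Z) : (X →ₗ[A] Y) →ₗ[k] (X →ₗ[A] Z) where
  toFun g := e.comp g
  map_add' g h := LinearMap.comp_add _ _ _
  map_smul' c g := by
    ext x
    exact e.map_smul_of_tower c (g x)

end Aux

section Good
variable {A : Type} [Ring A]
variable {M τM P N : Type}
  [AddCommGroup M] [Module A M]
  [AddCommGroup τM] [Module A τM]
  [AddCommGroup P] [Module A P] [Module.Projective A P]
  [AddCommGroup N] [Module A N] [IsNoetherian A N]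

/-- One step of the `M`-radical construction. -/
noncomputable def traceStep (M : Type) [AddCommGroup M] [Module A M] (S : Submodule A N) :
    Submodule A N :=
  Submodule.comap S.mkQ
    (LinearMap.range (Finsupp.lsum ℕ (fun f : M →ₗ[A] (N ⧸ S) => f)))

lemma le_traceStep (S : Submodule A N) : S ≤ traceStep M S := by
  intro x hx
  have : S.mkQ x = 0 := by simpa [Submodule.mkQ_apply, Submodule.Quotient.mk_eq_zero] using hx
  simp only [traceStep, Submodule.mem_comap, this]
  exact zero_mem _

lemma exists_good_submodule
    (hrigid : ∀ f : M →ₗ[A] τM, f = 0)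
    (hPM : ∀ f : P →ₗ[A] M, f = 0) :
    ∃ S : Submodule A N,
      (∀ f : M →ₗ[A] (N ⧸ S), f = 0) ∧
      (∀ φ : N →ₗ[A] τM, S ≤ LinearMap.ker φ) ∧
      (∀ g : P →ₗ[A] N, LinearMap.range g ≤ S → g = 0) := by
  classical
  set T : Submodule A N → Submodule A N := traceStep M with hT
  set C : ℕ → Submodule A N := fun i => T^[i] ⊥ with hC
  have hCsucc : ∀ i, C (i + 1) = T (C i) := by
    intro i; simp [hC, Function.iterate_succ_apply']
  have hmono : Monotone C := by
    apply monotone_nat_of_le_succ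
    intro i; rw [hCsucc]; exact le_traceStep _
  obtain ⟨m, hm⟩ := monotone_stabilizes_iff_noetherian.2 inferInstance ⟨C, hmono⟩
  have hfix : T (C m) = C m := by
    have := hm (m + 1) (Nat.le_succ m)
    simpa [hCsucc] using this.symm
  set S := C m with hS
  -- auxiliary: elements of the quotient in the range of the big evaluation map
  -- (1) every map M → N/S is zero
  have h1 : ∀ f : M →ₗ[A] (N ⧸ S), f = 0 := by
    intro f
    have hr : ∀ y ∈ LinearMap.range (Finsupp.lsum ℕ (fun f : M →ₗ[A] (N ⧸ S) => f)),
        y = 0 := by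
      intro y hy
      obtain ⟨x, hx⟩ := S.mkQ_surjective y
      have hxm : x ∈ traceStep M S := by
        simp only [traceStep, Submodule.mem_comap, hx]
        exact hy
      rw [hT] at hfix
      rw [hfix] at hxm
      rw [← hx]
      simpa [Submodule.mkQ_apply, Submodule.Quotient.mk_eq_zero] using hxm
    ext x
    refine hr _ ?_
    exact ⟨Finsupp.single f x, by simp⟩
  -- (2) S is contained in the kernel of every map N → τM
  have h2 : ∀ φ : N →ₗ[A] τM, S ≤ LinearMap.ker φ := by
    intro φ
    have : ∀ i, C i ≤ LinearMap.ker φ := by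
      intro i
      induction i with
      | zero => simp [hC]
      | succ i ih =>
        rw [hCsucc]
        intro x hx
        simp only [hT, traceStep, Submodule.mem_comap] at hx
        obtain ⟨l, hl⟩ := hx
        have hφ : φ x = (Submodule.liftQ (C i) φ ih) ((C i).mkQ x) := by
          simp [Submodule.liftQ_apply]
        rw [LinearMap.mem_ker, hφ, ← hl]
        have : (Submodule.liftQ (C i) φ ih).comp
            (Finsupp.lsum ℕ (fun f : M →ₗ[A] (N ⧸ C i) => f)) = 0 := by
          ext f x
          have : (Submodule.liftQ (C i) φ ih).comp f = 0 := hrigid _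
          simpa using LinearMap.congr_fun this x
        simpa using LinearMap.congr_fun this l
    exact this m
  -- (3) no nonzero map P → N lands inside S
  have h3 : ∀ i, ∀ g : P →ₗ[A] N, LinearMap.range g ≤ C i → g = 0 := by
    intro i
    induction i with
    | zero =>
      intro g hg
      rw [← LinearMap.range_eq_bot]
      simpa [hC] using hg
    | succ i ih =>
      intro g hg
      rw [hCsucc] at hg
      set Q := N ⧸ C i
      set ε : ((M →ₗ[A] Q) →₀ M) →ₗ[A] Q := Finsupp.lsum ℕ (fun f : M →ₗ[A] Q => f) with hε
      have hrng : LinearMap.range ((C i).mkQ.comp g) ≤ LinearMap.range ε := by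
        rw [LinearMap.range_comp]
        refine le_trans (Submodule.map_mono hg) ?_
        rw [hT, traceStep]
        exact Submodule.map_comap_le _ _
      have hgc : ∀ p, ((C i).mkQ.comp g) p ∈ LinearMap.range ε := fun p =>
        hrng (LinearMap.mem_range_self _ p)
      set gc : P →ₗ[A] LinearMap.range ε := LinearMap.codRestrict _ _ hgc with hgcdef
      obtain ⟨h, hh⟩ := Module.projective_lifting_property ε.rangeRestrict gc
        ε.surjective_rangeRestrict
      have hzero : ∀ p, h p = 0 := by
        intro p
        ext f
        have : (Finsupp.lapply f).comp h = (0 : P →ₗ[A] M) := hPM _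
        simpa using LinearMap.congr_fun this p
      have hgq : (C i).mkQ.comp g = 0 := by
        ext p
        have : ((C i).mkQ.comp g) p = (gc p : Q) := rfl
        rw [this, ← hh]
        simp [LinearMap.rangeRestrict, hzero p]
      refine ih g ?_
      intro x hx
      obtain ⟨p, rfl⟩ := hx
      have := LinearMap.congr_fun hgq p
      simpa [Submodule.mkQ_apply, Submodule.Quotient.mk_eq_zero] using this
  exact ⟨S, h1, h2, h3 m⟩

end Good



/-- For a τ-rigid pair `(M, P)` (`M` τ-rigid, `P` projective, `Hom_A(P, M) = 0`) and any
module `N`, the maximum of `⟨g_M - g_P, dim N₀⟩` over all quotient modules `N₀` of `N`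
equals `dim Hom_A(N, τM) + dim Hom_A(P, N)`. -/
theorem trop_F_eval_pair_eq_E_proj (n : ℕ) (k A : Type) [Field k] [Ring A] [Algebra k A]
    [FiniteDimensional k A]
    (M : Type) [AddCommGroup M] [Module A M] [Module k M] [IsScalarTower k A M]
    [FiniteDimensional k M] [SMulCommClass A k M]
    (τM : Type) [AddCommGroup τM] [Module A τM] [Module k τM] [IsScalarTower k A τM]
    [FiniteDimensional k τM] [SMulCommClass A k τM]
    (P : Type) [AddCommGroup P] [Module A P] [Module k P] [IsScalarTower k A P]
    [FiniteDimensional k P] [SMulCommClass A k P] [Module.Projective A P]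
    (N : Type) [AddCommGroup N] [Module A N] [Module k N] [IsScalarTower k A N]
    [FiniteDimensional k N] [SMulCommClass A k N]
    (dimVec : (X : Type) → [AddCommGroup X] → [Module A X] → Fin n → ℕ)
    (gM gP : Fin n → ℤ)
    -- the Auslander–Reiten formula characterizing the g-vector of M
    (hARM : ∀ (X : Type) [AddCommGroup X] [Module A X] [Module k X] [IsScalarTower k A X]
        [FiniteDimensional k X] [SMulCommClass A k X],
      (∑ i, gM i * (dimVec X i : ℤ)) =
        (Module.finrank k (X →ₗ[A] τM) : ℤ) - (Module.finrank k (M →ₗ[A] X) : ℤ))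
    -- the pairing formula characterizing the g-vector of the projective P
    (hgP : ∀ (X : Type) [AddCommGroup X] [Module A X] [Module k X] [IsScalarTower k A X]
        [FiniteDimensional k X] [SMulCommClass A k X],
      (∑ i, gP i * (dimVec X i : ℤ)) = -(Module.finrank k (P →ₗ[A] X) : ℤ))
    -- (M, P) is a τ-rigid pair
    (hrigid : ∀ f : M →ₗ[A] τM, f = 0)
    (hPM : ∀ f : P →ₗ[A] M, f = 0) :
    IsGreatest {x : ℤ | ∃ S : Submodule A N, x = ∑ i, (gM i - gP i) * (dimVec (N ⧸ S) i : ℤ)}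
      ((Module.finrank k (N →ₗ[A] τM) : ℤ) + (Module.finrank k (P →ₗ[A] N) : ℤ)) := by
  classical
  have key : ∀ S : Submodule A N,
      (∑ i, (gM i - gP i) * (dimVec (N ⧸ S) i : ℤ)) =
        ((finrank k ((N ⧸ S) →ₗ[A] τM) : ℤ) - (finrank k (M →ₗ[A] (N ⧸ S)) : ℤ))
          + (finrank k (P →ₗ[A] (N ⧸ S)) : ℤ) := by
    intro S
    have h1 := hARM (N ⧸ S)
    have h2 := hgP (N ⧸ S)
    have h3 : (∑ i, (gM i - gP i) * (dimVec (N ⧸ S) i : ℤ))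
        = (∑ i, gM i * (dimVec (N ⧸ S) i : ℤ)) - (∑ i, gP i * (dimVec (N ⧸ S) i : ℤ)) := by
      rw [← Finset.sum_sub_distrib]
      exact Finset.sum_congr rfl (fun i _ => by ring)
    rw [h3, h1, h2]; ring
  haveI := homFD (k := k) (A := A) (X := N) (Y := τM)
  haveI := homFD (k := k) (A := A) (X := P) (Y := N)
  constructor
  · -- membership: take the good submodule
    haveI : IsNoetherian A N := isNoetherian_of_tower k inferInstance
    obtain ⟨S, h1, h2, h3⟩ := exists_good_submodule (M := M) (τM := τM) (P := P) (N := N)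
      hrigid hPM
    refine ⟨S, ?_⟩
    haveI := homFD (k := k) (A := A) (X := N ⧸ S) (Y := τM)
    haveI := homFD (k := k) (A := A) (X := P) (Y := N ⧸ S)
    have e2 : finrank k (M →ₗ[A] (N ⧸ S)) = 0 := by
      haveI : Subsingleton (M →ₗ[A] (N ⧸ S)) := ⟨fun f g => by rw [h1 f, h1 g]⟩
      exact Module.finrank_zero_of_subsingleton
    have e1 : finrank k ((N ⧸ S) →ₗ[A] τM) = finrank k (N →ₗ[A] τM) := by
      refine LinearEquiv.finrank_eq
        (LinearEquiv.ofBijective (compQ (k := k) (Z := τM) S.mkQ) ⟨?_, ?_⟩)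
      · intro g g' hgg'
        ext x
        exact LinearMap.congr_fun hgg' x
      · intro φ
        exact ⟨Submodule.liftQ S φ (h2 φ), Submodule.liftQ_mkQ _ _ _⟩
    have e3 : finrank k (P →ₗ[A] (N ⧸ S)) = finrank k (P →ₗ[A] N) := by
      refine (LinearEquiv.finrank_eq
        (LinearEquiv.ofBijective (lcompQ (k := k) (X := P) S.mkQ) ⟨?_, ?_⟩)).symm
      · intro g g' hgg'
        have hrange : LinearMap.range (g - g') ≤ S := by
          rintro x ⟨p, rfl⟩
          have hp : S.mkQ (g p) = S.mkQ (g' p) := LinearMap.congr_fun hgg' p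
          simp only [Submodule.mkQ_apply] at hp
          have hz : (Submodule.Quotient.mk ((g - g') p) : N ⧸ S) = 0 := by
            simp [Submodule.Quotient.mk_sub, hp]
          exact (Submodule.Quotient.mk_eq_zero S).mp hz
        have := h3 _ hrange
        exact sub_eq_zero.mp this
      · intro g'
        exact Module.projective_lifting_property S.mkQ g' S.mkQ_surjective
    rw [key S, e1, e2, e3]
    simp
  · rintro x ⟨S, rfl⟩
    rw [key S]
    haveI := homFD (k := k) (A := A) (X := N ⧸ S) (Y := τM)
    haveI := homFD (k := k) (A := A) (X := P) (Y := N ⧸ S)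
    have le1 : finrank k ((N ⧸ S) →ₗ[A] τM) ≤ finrank k (N →ₗ[A] τM) := by
      apply LinearMap.finrank_le_finrank_of_injective
        (f := compQ (k := k) (Z := τM) S.mkQ)
      intro g g' hgg'
      ext x
      exact LinearMap.congr_fun hgg' x
    have le2 : finrank k (P →ₗ[A] (N ⧸ S)) ≤ finrank k (P →ₗ[A] N) := by
      have hsurj : Function.Surjective (lcompQ (k := k) (X := P) S.mkQ) := fun g' =>
        Module.projective_lifting_property S.mkQ g' S.mkQ_surjective
      have hr := LinearMap.finrank_range_le (lcompQ (k := k) (X := P) S.mkQ)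
      rwa [LinearMap.range_eq_top.2 hsurj, finrank_top] at hr
    omega
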